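/- Let A = !![a, b; c, d] be a real 2×2 matrix such that trace(A) < 0 and det(A) > 0 (so the origin is an attractor of X' = AX), and suppose m_R + p > 0 (the system is reactive). Then m_R < 0 < p, and for every t ≥ 0 and every nonzero X₀ ∈ ℝ², the solution of X' = AX with X(0) = X₀ satisfies ‖exp(t·A) · X₀‖ < (p/(−m_R))·‖X₀‖, where exp is the matrix exponential and ‖·‖ is the Euclidean norm on ℝ². That is, the maximal amplification ρ_max of a reactive attractor is bounded above by −p/m_R = 1/cos(2·δ_R). -/

import Mathlib

open Real Matrix

namespace Stmt17Aux

lemma inj2 : Function.Injective (fun n : ℕ => 2 * n) := by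
  intro a b h; simp only [] at h; omega

lemma inj2' : Function.Injective (fun n : ℕ => 2 * n + 1) := by
  intro a b h; simp only [] at h; omega

lemma summable_even (r : ℝ) :
    Summable (fun n : ℕ => r ^ n / ((2 * n).factorial : ℝ)) := by
  apply Summable.of_abs
  apply Summable.of_nonneg_of_le (fun n => abs_nonneg _) (fun n => ?_)
    (Real.summable_pow_div_factorial |r|)
  rw [abs_div, abs_pow, Nat.abs_cast]
  gcongr
  omega

lemma summable_odd (r : ℝ) :
    Summable (fun n : ℕ => r ^ n / ((2 * n + 1).factorial : ℝ)) := by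
  apply Summable.of_abs
  apply Summable.of_nonneg_of_le (fun n => abs_nonneg _) (fun n => ?_)
    (Real.summable_pow_div_factorial |r|)
  rw [abs_div, abs_pow, Nat.abs_cast]
  gcongr
  omega

lemma exp_split (y : ℝ) :
    (∑' n : ℕ, (y ^ 2) ^ n / ((2 * n).factorial : ℝ))
      + y * (∑' n : ℕ, (y ^ 2) ^ n / ((2 * n + 1).factorial : ℝ)) = Real.exp y := by
  have hexp : Real.exp y = ∑' n : ℕ, y ^ n / (n.factorial : ℝ) := by
    rw [Real.exp_eq_exp_ℝ]
    exact congrFun NormedSpace.exp_eq_tsum_div y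
  have hs := Real.summable_pow_div_factorial y
  have he : Summable (fun k : ℕ => y ^ (2 * k) / ((2 * k).factorial : ℝ)) :=
    hs.comp_injective inj2
  have ho : Summable (fun k : ℕ => y ^ (2 * k + 1) / ((2 * k + 1).factorial : ℝ)) :=
    hs.comp_injective inj2'
  rw [hexp]
  refine Eq.trans ?_ (tsum_even_add_odd he ho)
  congr 1
  · exact tsum_congr fun n => by rw [← pow_mul]
  · rw [← tsum_mul_left]
    exact tsum_congr fun n => by rw [← pow_mul, pow_succ, mul_comm 2 n]; ring

lemma sinh_split (y : ℝ) :
    y * (∑' n : ℕ, (y ^ 2) ^ n / ((2 * n + 1).factorial : ℝ)) = Real.sinh y := by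
  have h1 := exp_split y
  have h2 := exp_split (-y)
  rw [show (-y) ^ 2 = y ^ 2 by ring] at h2
  rw [Real.sinh_eq]
  linear_combination (h1 - h2) / 2

lemma exp_matrix_sq (M : Matrix (Fin 2) (Fin 2) ℝ) (r : ℝ)
    (h : M * M = r • (1 : Matrix (Fin 2) (Fin 2) ℝ)) :
    NormedSpace.exp M
      = (∑' n : ℕ, r ^ n / ((2 * n).factorial : ℝ)) • (1 : Matrix (Fin 2) (Fin 2) ℝ)
        + (∑' n : ℕ, r ^ n / ((2 * n + 1).factorial : ℝ)) • M := by
  letI : SeminormedRing (Matrix (Fin 2) (Fin 2) ℝ) := Matrix.linftyOpSemiNormedRing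
  letI : NormedRing (Matrix (Fin 2) (Fin 2) ℝ) := Matrix.linftyOpNormedRing
  letI : NormedAlgebra ℝ (Matrix (Fin 2) (Fin 2) ℝ) := Matrix.linftyOpNormedAlgebra
  have hpow_even : ∀ n : ℕ, M ^ (2 * n) = r ^ n • (1 : Matrix (Fin 2) (Fin 2) ℝ) := by
    intro n
    rw [pow_mul, pow_two, h, smul_pow, one_pow]
  have hpow_odd : ∀ n : ℕ, M ^ (2 * n + 1) = r ^ n • M := by
    intro n
    rw [pow_succ, hpow_even, smul_mul_assoc, one_mul]
  rw [NormedSpace.exp_eq_tsum (𝕂 := ℝ)]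
  refine HasSum.tsum_eq ?_
  refine HasSum.even_add_odd ?_ ?_
  · have h1 := ((summable_even r).hasSum).smul_const (1 : Matrix (Fin 2) (Fin 2) ℝ)
    convert h1 using 1
    case e'_3 => rfl
    funext n
    rw [hpow_even, smul_smul, inv_mul_eq_div]
  · have h1 := ((summable_odd r).hasSum).smul_const M
    convert h1 using 1
    case e'_3 => rfl
    funext n
    rw [hpow_odd, smul_smul, inv_mul_eq_div]

lemma quad_form_nonneg {A1 A2 G12 x0 x1 : ℝ} (hA1 : 0 ≤ A1) (hA2 : 0 ≤ A2)
    (hprod : A1 * A2 = G12 ^ 2) :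
    0 ≤ A1 * x0 ^ 2 - 2 * G12 * x0 * x1 + A2 * x1 ^ 2 := by
  rcases eq_or_lt_of_le hA1 with h | h
  · have hG : G12 = 0 := by nlinarith [sq_nonneg G12]
    rw [hG, ← h]
    have := mul_nonneg hA2 (sq_nonneg x1)
    nlinarith
  · nlinarith [sq_nonneg (A1 * x0 - G12 * x1)]

lemma gram_bound (ee b c p q F u W v x0 x1 : ℝ)
    (hq : q = ee ^ 2 + b * c) (hp2 : p ^ 2 = ee ^ 2 + ((b + c) / 2) ^ 2)
    (hF : F ^ 2 - q * u ^ 2 = 1) (hW2 : W ^ 2 = 1 + p ^ 2 * u ^ 2) (hW0 : 0 ≤ W)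
    (hp0 : 0 ≤ p) (hv2 : v ^ 2 = u ^ 2) (hv0 : 0 ≤ v) :
    (F * x0 + u * (ee * x0 + b * x1)) ^ 2 + (F * x1 + u * (c * x0 - ee * x1)) ^ 2
      ≤ (p * v + W) ^ 2 * (x0 ^ 2 + x1 ^ 2) := by
  have key : 4 * p ^ 2 * u ^ 2 * W ^ 2
      = (-2 * F * u * ee + u ^ 2 * (b ^ 2 - c ^ 2) / 2) ^ 2
        + (F * u * (b + c) + u ^ 2 * ee * (b - c)) ^ 2 := by
    linear_combination (4 * p ^ 2 * u ^ 2) * hW2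
      - (4 * u ^ 2 * (ee ^ 2 + (b + c) ^ 2 / 4)) * hF
      - (4 * u ^ 4 * (ee ^ 2 + (b + c) ^ 2 / 4)) * hq
      + (4 * u ^ 2 + 4 * u ^ 4 * (p ^ 2 + (ee ^ 2 + (b + c) ^ 2 / 4))) * hp2
  have hprod : (2 * p * v * W + (-2 * F * u * ee + u ^ 2 * (b ^ 2 - c ^ 2) / 2))
      * (2 * p * v * W - (-2 * F * u * ee + u ^ 2 * (b ^ 2 - c ^ 2) / 2))
      = (F * u * (b + c) + u ^ 2 * ee * (b - c)) ^ 2 := by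
    linear_combination key + (4 * p ^ 2 * W ^ 2) * hv2
  have hS : 0 ≤ 2 * p * v * W := by positivity
  have hA1 : 0 ≤ 2 * p * v * W + (-2 * F * u * ee + u ^ 2 * (b ^ 2 - c ^ 2) / 2) := by
    by_contra hcon
    push_neg at hcon
    have h3 : 0 < 2 * p * v * W - (-2 * F * u * ee + u ^ 2 * (b ^ 2 - c ^ 2) / 2) := by
      linarith
    have h4 := mul_neg_of_neg_of_pos hcon h3
    rw [hprod] at h4
    exact absurd h4 (not_lt.mpr (sq_nonneg _))
  have hA2 : 0 ≤ 2 * p * v * W - (-2 * F * u * ee + u ^ 2 * (b ^ 2 - c ^ 2) / 2) := by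
    by_contra hcon
    push_neg at hcon
    have h3 : 0 < 2 * p * v * W + (-2 * F * u * ee + u ^ 2 * (b ^ 2 - c ^ 2) / 2) := by
      linarith
    have h4 := mul_neg_of_pos_of_neg h3 hcon
    rw [hprod] at h4
    exact absurd h4 (not_lt.mpr (sq_nonneg _))
  have hQ := quad_form_nonneg hA1 hA2 hprod (x0 := x0) (x1 := x1)
  have hexp : (p * v + W) ^ 2 * (x0 ^ 2 + x1 ^ 2)
      - ((F * x0 + u * (ee * x0 + b * x1)) ^ 2 + (F * x1 + u * (c * x0 - ee * x1)) ^ 2)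
      = (2 * p * v * W + (-2 * F * u * ee + u ^ 2 * (b ^ 2 - c ^ 2) / 2)) * x0 ^ 2
        - 2 * (F * u * (b + c) + u ^ 2 * ee * (b - c)) * x0 * x1
        + (2 * p * v * W - (-2 * F * u * ee + u ^ 2 * (b ^ 2 - c ^ 2) / 2)) * x1 ^ 2 := by
    linear_combination (x0 ^ 2 + x1 ^ 2) * hW2 + p ^ 2 * (x0 ^ 2 + x1 ^ 2) * hv2
      - (x0 ^ 2 + x1 ^ 2) * hF + 2 * u ^ 2 * (x0 ^ 2 + x1 ^ 2) * hp2
      - u ^ 2 * (x0 ^ 2 + x1 ^ 2) * hq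
  linarith

lemma amp_lt (σ p t u : ℝ) (hσ : 0 < σ) (hpσ : σ < p) (ht : 0 ≤ t)
    (hu : |u| ≤ Real.sinh (σ * t) / σ) :
    Real.exp (-(σ * t)) * (p * |u| + Real.sqrt (1 + p ^ 2 * u ^ 2)) < p / σ := by
  obtain ⟨V, hV⟩ : ∃ V : ℝ, V = Real.sinh (σ * t) / σ := ⟨_, rfl⟩
  rw [← hV] at hu
  have hV0 : 0 ≤ V := le_trans (abs_nonneg u) hu
  have hu2 : u ^ 2 ≤ V ^ 2 := by
    have h1 : |u| ^ 2 ≤ V ^ 2 := pow_le_pow_left₀ (abs_nonneg u) hu 2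
    rwa [sq_abs] at h1
  have hp0 : 0 < p := hσ.trans hpσ
  have hW : Real.sqrt (1 + p ^ 2 * u ^ 2) ≤ Real.sqrt (1 + p ^ 2 * V ^ 2) := by
    apply Real.sqrt_le_sqrt
    nlinarith [sq_nonneg p]
  have hVs : σ * V = Real.sinh (σ * t) := by
    rw [hV]; field_simp
  have hVs2 : σ ^ 2 * V ^ 2 = Real.sinh (σ * t) ^ 2 := by
    rw [← hVs]; ring
  have hcosh : Real.sqrt (1 + p ^ 2 * V ^ 2) < (p / σ) * Real.cosh (σ * t) := by
    rw [Real.sqrt_lt' (by positivity)]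
    have hch := Real.cosh_sq (σ * t)
    have hσ2 : (0:ℝ) < σ ^ 2 := by positivity
    rw [div_mul_eq_mul_div, div_pow, lt_div_iff₀ hσ2]
    nlinarith [hch, hVs2, sq_nonneg V]
  have hsum : p * |u| + Real.sqrt (1 + p ^ 2 * u ^ 2) < (p / σ) * Real.exp (σ * t) := by
    have h5 : p * |u| ≤ p * V := mul_le_mul_of_nonneg_left hu hp0.le
    have h6 : (p / σ) * Real.exp (σ * t) = p * V + (p / σ) * Real.cosh (σ * t) := by
      rw [← Real.sinh_add_cosh, ← hVs]
      field_simp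
    linarith
  calc Real.exp (-(σ * t)) * (p * |u| + Real.sqrt (1 + p ^ 2 * u ^ 2))
      < Real.exp (-(σ * t)) * ((p / σ) * Real.exp (σ * t)) := by
        apply mul_lt_mul_of_pos_left hsum (Real.exp_pos _)
    _ = p / σ := by
        rw [Real.exp_neg]
        field_simp

end Stmt17Aux

open Stmt17Aux in
set_option maxHeartbeats 1000000 in
theorem stmt_17 (a b c d : ℝ) (A : Matrix (Fin 2) (Fin 2) ℝ) (hA : A = !![a, b; c, d])
    (mR p : ℝ) (hmR : mR = (a + d) / 2)
    (hp : p = (1 / 2) * Real.sqrt ((a - d) ^ 2 + (b + c) ^ 2))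
    (htr : A.trace < 0) (hdet : 0 < A.det) (hreac : 0 < mR + p) :
    mR < 0 ∧ 0 < p ∧
    ∀ t : ℝ, 0 ≤ t → ∀ X₀ : Fin 2 → ℝ, X₀ ≠ 0 →
      Real.sqrt (((NormedSpace.exp (t • A)).mulVec X₀ 0) ^ 2 +
          ((NormedSpace.exp (t • A)).mulVec X₀ 1) ^ 2) <
        (p / (-mR)) * Real.sqrt ((X₀ 0) ^ 2 + (X₀ 1) ^ 2) := by
  have htr' : a + d < 0 := by
    rw [hA, Matrix.trace_fin_two_of] at htr; exact htr
  have hdet' : 0 < a * d - b * c := by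
    rw [hA, Matrix.det_fin_two_of] at hdet; exact hdet
  have hmR0 : mR < 0 := by rw [hmR]; linarith
  have hσ : 0 < -mR := by linarith
  have hpσ : -mR < p := by linarith
  have hp0 : 0 < p := hσ.trans hpσ
  refine ⟨hmR0, hp0, ?_⟩
  intro t ht X₀ hX₀
  obtain ⟨ee, hee⟩ : ∃ x : ℝ, x = (a - d) / 2 := ⟨_, rfl⟩
  obtain ⟨q, hqdef⟩ : ∃ x : ℝ, x = ee ^ 2 + b * c := ⟨_, rfl⟩
  have hp2 : p ^ 2 = ee ^ 2 + ((b + c) / 2) ^ 2 := by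
    rw [hp, mul_pow, sq_sqrt (by positivity), hee]
    ring
  have hqσ : q ≤ (-mR) ^ 2 := by
    rw [hqdef, hee, hmR]
    have hr : (-((a + d) / 2)) ^ 2 - (((a - d) / 2) ^ 2 + b * c) = a * d - b * c := by ring
    linarith
  obtain ⟨C, hC⟩ : ∃ X : Matrix (Fin 2) (Fin 2) ℝ, X = !![ee, b; c, -ee] := ⟨_, rfl⟩
  have hMM : (t • C) * (t • C) = (q * t ^ 2) • (1 : Matrix (Fin 2) (Fin 2) ℝ) := by
    rw [hC, hqdef, Matrix.one_fin_two]
    ext i j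
    fin_cases i <;> fin_cases j <;>
      simp [Matrix.mul_apply, Fin.sum_univ_two] <;> ring
  obtain ⟨F, hFdef⟩ : ∃ x : ℝ, x = ∑' n : ℕ, (q * t ^ 2) ^ n / ((2 * n).factorial : ℝ) :=
    ⟨_, rfl⟩
  obtain ⟨G, hGdef⟩ : ∃ x : ℝ, x = ∑' n : ℕ, (q * t ^ 2) ^ n / ((2 * n + 1).factorial : ℝ) :=
    ⟨_, rfl⟩
  obtain ⟨u, hudef⟩ : ∃ x : ℝ, x = t * G := ⟨_, rfl⟩
  have hE : NormedSpace.exp (t • C) = F • 1 + G • (t • C) := by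
    rw [hFdef, hGdef]; exact exp_matrix_sq _ _ hMM
  have hEneg : NormedSpace.exp (-(t • C)) = F • 1 + G • (-(t • C)) := by
    rw [hFdef, hGdef]; exact exp_matrix_sq _ _ (by rw [neg_mul_neg]; exact hMM)
  have hFG : F ^ 2 - (q * t ^ 2) * G ^ 2 = 1 := by
    have h1 : NormedSpace.exp (t • C) * NormedSpace.exp (-(t • C)) = 1 := by
      rw [← Matrix.exp_add_of_commute _ _ ((Commute.refl (t • C)).neg_right)]
      rw [add_neg_cancel]
      exact NormedSpace.exp_zero
    rw [hE, hEneg] at h1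
    have h2 : (F • (1 : Matrix (Fin 2) (Fin 2) ℝ) + G • (t • C)) * (F • 1 + G • (-(t • C)))
        = (F ^ 2 - (q * t ^ 2) * G ^ 2) • (1 : Matrix (Fin 2) (Fin 2) ℝ) := by
      rw [mul_add, add_mul, add_mul, smul_mul_smul_comm, smul_mul_smul_comm,
        smul_mul_smul_comm, smul_mul_smul_comm]
      simp only [mul_neg, mul_one, one_mul, hMM, smul_neg, smul_smul]
      module
    rw [h2] at h1
    have h3 := congrFun (congrFun h1 0) 0
    simpa using h3
  have hFu : F ^ 2 - q * u ^ 2 = 1 := by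
    rw [hudef]
    linear_combination hFG
  have hscalar : NormedSpace.exp ((t * mR) • (1 : Matrix (Fin 2) (Fin 2) ℝ))
      = Real.exp (t * mR) • (1 : Matrix (Fin 2) (Fin 2) ℝ) := by
    have hMM0 : ((t * mR) • (1 : Matrix (Fin 2) (Fin 2) ℝ)) * ((t * mR) • 1)
        = ((t * mR) ^ 2) • (1 : Matrix (Fin 2) (Fin 2) ℝ) := by
      rw [smul_mul_smul_comm, one_mul, ← sq]
    rw [exp_matrix_sq _ _ hMM0, smul_smul, ← add_smul]
    congr 1
    have hsp := exp_split (t * mR)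
    linear_combination hsp
  have hsplit : t • A = (t * mR) • (1 : Matrix (Fin 2) (Fin 2) ℝ) + t • C := by
    rw [hA, hC, hmR, Matrix.one_fin_two, hee]
    ext i j
    fin_cases i <;> fin_cases j <;> simp <;> ring
  have hexpA : NormedSpace.exp (t • A)
      = Real.exp (t * mR) • (F • 1 + G • (t • C)) := by
    rw [hsplit, Matrix.exp_add_of_commute _ _
      (Commute.smul_left (Commute.one_left (t • C)) (t * mR)), hscalar, hE,
      smul_mul_assoc, one_mul]
  obtain ⟨Ex, hExdef⟩ : ∃ x : ℝ, x = Real.exp (t * mR) := ⟨_, rfl⟩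
  have hExpos : 0 < Ex := by rw [hExdef]; exact Real.exp_pos _
  have hmv0 : (NormedSpace.exp (t • A)).mulVec X₀ 0
      = Ex * ((F + u * ee) * X₀ 0 + u * b * X₀ 1) := by
    rw [hexpA, ← hExdef, hudef, hC, Matrix.one_fin_two]
    simp only [Matrix.mulVec, dotProduct, Fin.sum_univ_two, Matrix.smul_apply,
      Matrix.add_apply, smul_eq_mul, Matrix.cons_val', Matrix.cons_val_zero,
      Matrix.cons_val_one, Matrix.head_cons, Matrix.empty_val', Matrix.cons_val_fin_one,
      Matrix.head_fin_const, Matrix.of_apply]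
    ring
  have hmv1 : (NormedSpace.exp (t • A)).mulVec X₀ 1
      = Ex * (u * c * X₀ 0 + (F - u * ee) * X₀ 1) := by
    rw [hexpA, ← hExdef, hudef, hC, Matrix.one_fin_two]
    simp only [Matrix.mulVec, dotProduct, Fin.sum_univ_two, Matrix.smul_apply,
      Matrix.add_apply, smul_eq_mul, Matrix.cons_val', Matrix.cons_val_zero,
      Matrix.cons_val_one, Matrix.head_cons, Matrix.empty_val', Matrix.cons_val_fin_one,
      Matrix.head_fin_const, Matrix.of_apply]
    ring
  obtain ⟨x0, hx0⟩ : ∃ x : ℝ, x = X₀ 0 := ⟨_, rfl⟩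
  obtain ⟨x1, hx1⟩ : ∃ x : ℝ, x = X₀ 1 := ⟨_, rfl⟩
  have hxpos : 0 < x0 ^ 2 + x1 ^ 2 := by
    have hne : x0 ≠ 0 ∨ x1 ≠ 0 := by
      by_contra hcon
      push_neg at hcon
      apply hX₀
      funext i
      fin_cases i
      · have := hcon.1; rw [hx0] at this; simpa using this
      · have := hcon.2; rw [hx1] at this; simpa using this
    rcases hne with h | h
    · have h1 : 0 < x0 ^ 2 := lt_of_le_of_ne (sq_nonneg x0) (Ne.symm (pow_ne_zero 2 h))
      linarith [sq_nonneg x1]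
    · have h1 : 0 < x1 ^ 2 := lt_of_le_of_ne (sq_nonneg x1) (Ne.symm (pow_ne_zero 2 h))
      linarith [sq_nonneg x0]
  obtain ⟨W, hWdef⟩ : ∃ x : ℝ, x = Real.sqrt (1 + p ^ 2 * u ^ 2) := ⟨_, rfl⟩
  have hW2 : W ^ 2 = 1 + p ^ 2 * u ^ 2 := by
    rw [hWdef]; exact Real.sq_sqrt (by positivity)
  have hW0 : 0 ≤ W := by rw [hWdef]; exact Real.sqrt_nonneg _
  have hZ := gram_bound ee b c p q F u W |u| x0 x1 hqdef hp2 hFu hW2 hW0 hp0.le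
    (sq_abs u) (abs_nonneg u)
  have hu : |u| ≤ Real.sinh (-mR * t) / (-mR) := by
    rcases le_or_gt 0 q with hq0 | hq0
    · have hG0 : 0 ≤ G := by
        rw [hGdef]
        exact tsum_nonneg fun n => by positivity
      have hu0 : 0 ≤ u := by rw [hudef]; exact mul_nonneg ht hG0
      rw [abs_of_nonneg hu0]
      have hterm : ∀ n : ℕ, (q * t ^ 2) ^ n / ((2 * n + 1).factorial : ℝ)
          ≤ ((-mR * t) ^ 2) ^ n / ((2 * n + 1).factorial : ℝ) := by
        intro n
        gcongr
        calc q * t ^ 2 ≤ (-mR) ^ 2 * t ^ 2 := mul_le_mul_of_nonneg_right hqσ (sq_nonneg t)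
          _ = (-mR * t) ^ 2 := by ring
      have hle : G ≤ ∑' n : ℕ, ((-mR * t) ^ 2) ^ n / ((2 * n + 1).factorial : ℝ) := by
        rw [hGdef]
        exact Summable.tsum_le_tsum hterm (summable_odd _) (summable_odd _)
      have hfin : t * ∑' n : ℕ, ((-mR * t) ^ 2) ^ n / ((2 * n + 1).factorial : ℝ)
          = Real.sinh (-mR * t) / (-mR) := by
        have hss := sinh_split (-mR * t)
        rw [eq_div_iff (ne_of_gt hσ)]
        linear_combination hss
      calc u = t * G := hudef
        _ ≤ t * ∑' n : ℕ, ((-mR * t) ^ 2) ^ n / ((2 * n + 1).factorial : ℝ) :=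
            mul_le_mul_of_nonneg_left hle ht
        _ = Real.sinh (-mR * t) / (-mR) := hfin
    · obtain ⟨μ, hμdef⟩ : ∃ x : ℝ, x = Real.sqrt (-q) := ⟨_, rfl⟩
      have hμpos : 0 < μ := by
        rw [hμdef]; exact Real.sqrt_pos.mpr (by linarith)
      have hμ2 : μ ^ 2 = -q := by
        rw [hμdef]; exact Real.sq_sqrt (by linarith)
      have hterm : ∀ n : ℕ, t * ((q * t ^ 2) ^ n / ((2 * n + 1).factorial : ℝ))
          = ((-1 : ℝ) ^ n * (μ * t) ^ (2 * n + 1) / ((2 * n + 1).factorial : ℝ)) / μ := by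
        intro n
        have hq' : q * t ^ 2 = -((μ * t) ^ 2) := by linear_combination t ^ 2 * hμ2
        rw [hq', neg_pow, ← pow_mul]
        have hμne : μ ≠ 0 := ne_of_gt hμpos
        rw [pow_succ _ (2 * n)]
        field_simp
      have husum : HasSum (fun n : ℕ => t * ((q * t ^ 2) ^ n / ((2 * n + 1).factorial : ℝ)))
          (Real.sin (μ * t) / μ) := by
        have hs := (Real.hasSum_sin (μ * t)).div_const μ
        simp only [hterm]
        exact hs
      have hueq : u = Real.sin (μ * t) / μ := by
        rw [hudef, hGdef, ← tsum_mul_left]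
        exact husum.tsum_eq
      rw [hueq]
      have h8 : |Real.sin (μ * t) / μ| ≤ t := by
        rw [abs_div, abs_of_pos hμpos, div_le_iff₀ hμpos]
        calc |Real.sin (μ * t)| ≤ |μ * t| := Real.abs_sin_le_abs
          _ = μ * t := abs_of_nonneg (mul_nonneg hμpos.le ht)
          _ = t * μ := mul_comm _ _
      have h9 : t ≤ Real.sinh (-mR * t) / (-mR) := by
        rw [le_div_iff₀ hσ]
        have h10 : -mR * t ≤ Real.sinh (-mR * t) :=
          Real.self_le_sinh_iff.mpr (mul_nonneg hσ.le ht)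
        linarith [h10, mul_comm t (-mR)]
      exact le_trans h8 h9
  have hamp : Ex * (p * |u| + W) < p / (-mR) := by
    have h11 := amp_lt (-mR) p t u hσ hpσ ht hu
    rw [← hWdef] at h11
    have hEx : Ex = Real.exp (-(-mR * t)) := by
      rw [hExdef]; ring_nf
    rw [hEx]
    exact h11
  have hfac0 : 0 ≤ Ex * (p * |u| + W) := by
    have h12 : 0 ≤ p * |u| := mul_nonneg hp0.le (abs_nonneg u)
    exact mul_nonneg hExpos.le (by linarith)
  have hsq : (Ex * ((F + u * ee) * x0 + u * b * x1)) ^ 2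
      + (Ex * (u * c * x0 + (F - u * ee) * x1)) ^ 2
      ≤ (Ex * (p * |u| + W)) ^ 2 * (x0 ^ 2 + x1 ^ 2) := by
    have h7 := mul_le_mul_of_nonneg_left hZ (sq_nonneg Ex)
    calc (Ex * ((F + u * ee) * x0 + u * b * x1)) ^ 2
        + (Ex * (u * c * x0 + (F - u * ee) * x1)) ^ 2
        = Ex ^ 2 * ((F * x0 + u * (ee * x0 + b * x1)) ^ 2
            + (F * x1 + u * (c * x0 - ee * x1)) ^ 2) := by ring
      _ ≤ Ex ^ 2 * ((p * |u| + W) ^ 2 * (x0 ^ 2 + x1 ^ 2)) := h7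
      _ = (Ex * (p * |u| + W)) ^ 2 * (x0 ^ 2 + x1 ^ 2) := by ring
  rw [hmv0, hmv1, ← hx0, ← hx1]
  calc Real.sqrt ((Ex * ((F + u * ee) * x0 + u * b * x1)) ^ 2
        + (Ex * (u * c * x0 + (F - u * ee) * x1)) ^ 2)
      ≤ Real.sqrt ((Ex * (p * |u| + W)) ^ 2 * (x0 ^ 2 + x1 ^ 2)) := Real.sqrt_le_sqrt hsq
    _ = (Ex * (p * |u| + W)) * Real.sqrt (x0 ^ 2 + x1 ^ 2) := by
        rw [Real.sqrt_mul (sq_nonneg _), Real.sqrt_sq hfac0]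
    _ < (p / (-mR)) * Real.sqrt (x0 ^ 2 + x1 ^ 2) :=
        mul_lt_mul_of_pos_right hamp (Real.sqrt_pos.mpr hxpos)
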